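/- Let G be a finite group of diagonal linear automorphisms of C^2, where a general element has the form φ(x,y) = (l^a x, l^b y) with l a primitive n-th root of unity (n the order of φ) and gcd(a,b,n)=1. Suppose there exists an integer u such that a ≡ bu (mod n) for every element of G (with its corresponding a, b, n). Then G is cyclic, and G has a generator of the form ψ(x,y) = (ζ^u x, ζ y) for some root of unity ζ. -/

import Mathlib

/-- A finite diagonal linear group on `ℂ²` (encoded as a subgroup of `ℂˣ × ℂˣ`) all of whose
elements `φ(x,y) = (lᵃx, lᵇy)` (with `l` a primitive `n`-th root of unity, `n = ord(φ)`,
`gcd(a,b,n)=1`) satisfy `a ≡ bu (mod n)` for a fixed integer `u`, is cyclic with a generator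
of the form `ψ(x,y) = (ζᵘ x, ζ y)` for some root of unity `ζ`. -/
theorem stmt3 (u : ℤ) (H : Subgroup (ℂˣ × ℂˣ)) [Finite H]
    (hcong : ∀ φ ∈ H, ∀ (n : ℕ) (l : ℂˣ) (a b : ℤ),
      0 < n → orderOf φ = n → orderOf l = n → φ.1 = l ^ a → φ.2 = l ^ b →
      Int.gcd (Int.gcd a b : ℤ) (n : ℤ) = 1 → (n : ℤ) ∣ (a - b * u)) :
    ∃ ζ : ℂˣ, (∃ k : ℕ, 0 < k ∧ ζ ^ k = 1) ∧
      Subgroup.zpowers ((ζ ^ u, ζ) : ℂˣ × ℂˣ) = H := by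
  -- Step 1: every element of `H` satisfies `φ.1 = φ.2 ^ u`.
  have key : ∀ φ ∈ H, φ.1 = φ.2 ^ u := by
    intro φ hφ
    have hnpos : 0 < orderOf φ := by
      have h := orderOf_injective H.subtype (Subgroup.subtype_injective H) (⟨φ, hφ⟩ : H)
      have hp : 0 < orderOf (⟨φ, hφ⟩ : H) := orderOf_pos _
      rw [← h] at hp
      exact hp
    set n := orderOf φ with hn
    haveI : NeZero n := ⟨hnpos.ne'⟩
    have hz : IsPrimitiveRoot (Complex.exp (2 * Real.pi * Complex.I / n)) n :=
      Complex.isPrimitiveRoot_exp n hnpos.ne'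
    have hφn : φ ^ n = 1 := pow_orderOf_eq_one φ
    have h1u : φ.1 ^ n = 1 := by have := congrArg Prod.fst hφn; simpa using this
    have h2u : φ.2 ^ n = 1 := by have := congrArg Prod.snd hφn; simpa using this
    have h1n : ((φ.1 : ℂ)) ^ n = 1 := by
      rw [← Units.val_pow_eq_pow_val, h1u, Units.val_one]
    have h2n : ((φ.2 : ℂ)) ^ n = 1 := by
      rw [← Units.val_pow_eq_pow_val, h2u, Units.val_one]
    obtain ⟨a, halt, ha⟩ := hz.eq_pow_of_pow_eq_one h1n
    obtain ⟨b, hblt, hb⟩ := hz.eq_pow_of_pow_eq_one h2n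
    have hl : IsPrimitiveRoot ((hz.isUnit hnpos.ne').unit) n := hz.isUnit_unit hnpos.ne'
    set l : ℂˣ := (hz.isUnit hnpos.ne').unit with hldef
    have hlcoe : (l : ℂ) = Complex.exp (2 * Real.pi * Complex.I / n) :=
      IsUnit.unit_spec _
    have hord : orderOf l = n := hl.eq_orderOf.symm
    have ha' : φ.1 = l ^ (a : ℤ) := by
      rw [zpow_natCast]
      apply Units.ext
      rw [Units.val_pow_eq_pow_val, hlcoe, ha]
    have hb' : φ.2 = l ^ (b : ℤ) := by
      rw [zpow_natCast]
      apply Units.ext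
      rw [Units.val_pow_eq_pow_val, hlcoe, hb]
    -- gcd(a, b, n) = 1
    set d := Nat.gcd (Nat.gcd a b) n with hd
    have hdn : d ∣ n := Nat.gcd_dvd_right _ _
    have hda : d ∣ a := (Nat.gcd_dvd_left _ _).trans (Nat.gcd_dvd_left _ _)
    have hdb : d ∣ b := (Nat.gcd_dvd_left _ _).trans (Nat.gcd_dvd_right _ _)
    have hdpos : 0 < d := Nat.gcd_pos_of_pos_right _ hnpos
    have hnda : n ∣ a * (n / d) := by
      obtain ⟨a', ha2⟩ := hda
      refine ⟨a', ?_⟩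
      rw [ha2, mul_comm d a', mul_assoc, Nat.mul_div_cancel' hdn, mul_comm]
    have hndb : n ∣ b * (n / d) := by
      obtain ⟨b', hb2⟩ := hdb
      refine ⟨b', ?_⟩
      rw [hb2, mul_comm d b', mul_assoc, Nat.mul_div_cancel' hdn, mul_comm]
    have hφpow : φ ^ (n / d) = 1 := by
      have h1 : φ.1 ^ (n / d) = 1 := by
        rw [ha', ← zpow_natCast (l ^ (a : ℤ)) (n / d), ← zpow_mul]
        apply (orderOf_dvd_iff_zpow_eq_one).mp
        rw [hord]
        exact_mod_cast hnda
      have h2 : φ.2 ^ (n / d) = 1 := by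
        rw [hb', ← zpow_natCast (l ^ (b : ℤ)) (n / d), ← zpow_mul]
        apply (orderOf_dvd_iff_zpow_eq_one).mp
        rw [hord]
        exact_mod_cast hndb
      exact Prod.ext (by simpa using h1) (by simpa using h2)
    have hnd : n ∣ n / d := hn ▸ orderOf_dvd_of_pow_eq_one hφpow
    have hd1 : d = 1 := by
      have hndpos : 0 < n / d := Nat.div_pos (Nat.le_of_dvd hnpos hdn) hdpos
      have hle : n ≤ n / d := Nat.le_of_dvd hndpos hnd
      have hge : n / d ≤ n := Nat.div_le_self _ _
      have hdiv : n / d = n := le_antisymm hge hle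
      have hmul : n / d * d = n := Nat.div_mul_cancel hdn
      rw [hdiv] at hmul
      have : n * d = n * 1 := by rw [mul_one]; exact hmul
      exact Nat.eq_of_mul_eq_mul_left hnpos this
    have hgcd : Int.gcd (Int.gcd (a : ℤ) (b : ℤ) : ℤ) (n : ℤ) = 1 := by
      rw [Int.gcd_natCast_natCast, Int.gcd_natCast_natCast]
      exact hd1
    have hdvd := hcong φ hφ n l (a : ℤ) (b : ℤ) hnpos hn.symm hord ha' hb' hgcd
    rw [ha', hb', ← zpow_mul]
    have hone : l ^ ((a : ℤ) - (b : ℤ) * u) = 1 := by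
      apply (orderOf_dvd_iff_zpow_eq_one).mp
      rw [hord]; exact hdvd
    rw [zpow_sub, mul_inv_eq_one] at hone
    exact hone
  -- Step 2: the projection of H onto the second coordinate is cyclic.
  set K := H.map (MonoidHom.snd ℂˣ ℂˣ) with hK
  have hKfin : Finite K := by
    have h1 : ((K : Set ℂˣ)) = (MonoidHom.snd ℂˣ ℂˣ) '' (H : Set (ℂˣ × ℂˣ)) :=
      Subgroup.coe_map _ _
    have h2 : ((H : Set (ℂˣ × ℂˣ))).Finite := Set.toFinite _
    have h3 : ((K : Set ℂˣ)).Finite := h1 ▸ h2.image _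
    exact h3.to_subtype
  haveI : IsCyclic K := subgroup_units_cyclic K
  obtain ⟨g, hg⟩ := IsCyclic.exists_generator (α := K)
  refine ⟨(g : ℂˣ), ⟨orderOf g, orderOf_pos g, ?_⟩, ?_⟩
  · have := pow_orderOf_eq_one g
    have := congrArg (Subtype.val) this
    simpa only [SubmonoidClass.coe_pow, OneMemClass.coe_one] using this
  · obtain ⟨φ₀, hφ₀H, hφ₀2⟩ := Subgroup.mem_map.mp g.2
    have hφ₀eq : φ₀ = ((g : ℂˣ) ^ u, (g : ℂˣ)) := by
      have h1 := key φ₀ hφ₀H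
      have h2 : φ₀.2 = (g : ℂˣ) := hφ₀2
      exact Prod.ext (by rw [h1, h2]) h2
    have hgen : ((g : ℂˣ) ^ u, (g : ℂˣ)) ∈ H := hφ₀eq ▸ hφ₀H
    apply le_antisymm
    · exact (Subgroup.zpowers_le).mpr hgen
    · intro φ hφ
      have hφ2K : φ.2 ∈ K := Subgroup.mem_map.mpr ⟨φ, hφ, rfl⟩
      obtain ⟨m, hm⟩ := hg ⟨φ.2, hφ2K⟩
      have hm' : (g : ℂˣ) ^ m = φ.2 := by
        have := congrArg (Subtype.val) hm
        simpa using this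
      refine ⟨m, ?_⟩
      have h1 := key φ hφ
      refine Prod.ext ?_ ?_
      · show ((g : ℂˣ) ^ u) ^ m = φ.1
        rw [h1, ← hm', ← zpow_mul, ← zpow_mul, mul_comm]
      · exact hm'
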